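/- For every π ∈ NC(n), the Hasse-diagram distance between π and its Kreweras complement Kr(π) equals n − 1. -/

import Mathlib

/-- A partition of `{1,...,n}` (modeled as a setoid on `Fin n`) is non-crossing. -/
def IsNoncrossing {n : ℕ} (s : Setoid (Fin n)) : Prop :=
  ∀ a b c d : Fin n, a < b → b < c → c < d → s.r a c → s.r b d → s.r a b

/-- `NC n`: the set of non-crossing partitions of `{1,...,n}`, ordered by reverse
refinement (the order induced from the refinement order on setoids). -/
abbrev NC (n : ℕ) := {s : Setoid (Fin n) // IsNoncrossing s}

/-- The number of blocks of a partition. -/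
noncomputable def blocks {n : ℕ} (s : Setoid (Fin n)) : ℕ := Nat.card (Quotient s)

/-- The Hasse diagram of `NC n`: vertices are non-crossing partitions, edges join
pairs where one covers the other. -/
def hasse (n : ℕ) : SimpleGraph (NC n) where
  Adj x y := x ⋖ y ∨ y ⋖ x
  symm := ⟨fun _ _ h => h.symm⟩
  loopless := ⟨fun x h => lt_irrefl x (h.elim CovBy.lt CovBy.lt)⟩

/-- `p` is the permutation associated to the partition `s`: each block of `s` is a
cycle of `p`, traversed in increasing order. (Equivalently: `p i` is the least
element of the block of `i` that is larger than `i` if one exists, and otherwise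
the least element of the block of `i`.) -/
def IsBlockPerm {n : ℕ} (s : Setoid (Fin n)) (p : Equiv.Perm (Fin n)) : Prop :=
  ∀ i : Fin n,
    IsLeast {j | s.r i j ∧ i < j} (p i) ∨
    ((¬ ∃ j, s.r i j ∧ i < j) ∧ IsLeast {j | s.r i j} (p i))

/-- The number of cycles of a permutation, counting fixed points as cycles. -/
def cycleCount {n : ℕ} (σ : Equiv.Perm (Fin n)) : ℕ :=
  Multiset.card σ.cycleType + (Finset.univ.filter fun x => σ x = x).card

/-- The norm of a permutation: the least `g` such that `σ` is a product of `g`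
transpositions. -/
noncomputable def permNorm {n : ℕ} (σ : Equiv.Perm (Fin n)) : ℕ :=
  sInf {g | ∃ l : List (Equiv.Perm (Fin n)),
    l.length = g ∧ (∀ t ∈ l, t.IsSwap) ∧ l.prod = σ}


namespace KrewerasAux
attribute [local instance] Classical.propDecidable
open Finset

variable {n : ℕ}


noncomputable def Mx (s : Setoid (Fin n)) : Finset (Fin n) :=
  Finset.univ.filter fun i => ∀ j, s.r i j → j ≤ i

lemma mem_Mx {s : Setoid (Fin n)} {i} : i ∈ Mx s ↔ ∀ j, s.r i j → j ≤ i := by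
  simp [Mx]

lemma Mx_unique {s : Setoid (Fin n)} {i j} (hi : i ∈ Mx s) (hj : j ∈ Mx s)
    (h : s.r i j) : i = j :=
  le_antisymm ((mem_Mx.1 hj) i (s.symm' h)) ((mem_Mx.1 hi) j h)

noncomputable def rep (s : Setoid (Fin n)) (a : Fin n) : Fin n :=
  (Finset.univ.filter fun j => s.r a j).max' ⟨a, by simp⟩

lemma rep_rel (s : Setoid (Fin n)) (a : Fin n) : s.r a (rep s a) := by
  have := (Finset.univ.filter fun j => s.r a j).max'_mem ⟨a, by simp⟩
  simpa [rep] using (Finset.mem_filter.1 this).2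

lemma rep_mem_Mx (s : Setoid (Fin n)) (a : Fin n) : rep s a ∈ Mx s := by
  rw [mem_Mx]
  intro j hj
  have hjmem : j ∈ Finset.univ.filter fun j => s.r a j := by
    simp only [Finset.mem_filter, Finset.mem_univ, true_and]
    exact s.trans' (rep_rel s a) hj
  exact Finset.le_max' _ _ hjmem

lemma rep_eq_of_mem_Mx {s : Setoid (Fin n)} {a : Fin n} (ha : a ∈ Mx s) : rep s a = a :=
  Mx_unique (rep_mem_Mx s a) ha (s.symm' (rep_rel s a))

lemma rep_eq_rep_of_rel {s : Setoid (Fin n)} {a b : Fin n} (h : s.r a b) :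
    rep s a = rep s b :=
  Mx_unique (rep_mem_Mx s a) (rep_mem_Mx s b)
    (s.trans' (s.symm' (rep_rel s a)) (s.trans' h (rep_rel s b)))

lemma rel_iff_rep_eq {s : Setoid (Fin n)} {a b : Fin n} :
    s.r a b ↔ rep s a = rep s b := by
  refine ⟨rep_eq_rep_of_rel, fun h => ?_⟩
  exact s.trans' (rep_rel s a) (h ▸ s.symm' (rep_rel s b))

noncomputable def blocksEquiv (s : Setoid (Fin n)) : Quotient s ≃ {i // i ∈ Mx s} where
  toFun := Quotient.lift (fun a => (⟨rep s a, rep_mem_Mx s a⟩ : {i // i ∈ Mx s}))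
    (fun a b h => by simpa using rep_eq_rep_of_rel h)
  invFun := fun i => Quotient.mk s i.1
  left_inv := by
    rintro ⟨a⟩
    exact Quotient.sound (s.symm' (rep_rel s a))
  right_inv := fun i => by
    simp only [Quotient.lift_mk]
    exact Subtype.ext (rep_eq_of_mem_Mx i.2)

lemma blocks_eq_card_Mx (s : Setoid (Fin n)) : blocks s = (Mx s).card := by
  rw [blocks, Nat.card_congr (blocksEquiv s)]
  exact Nat.card_eq_finsetCard _

lemma Mx_antitone {s t : Setoid (Fin n)} (h : s ≤ t) : Mx t ⊆ Mx s := by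
  intro i hi
  rw [mem_Mx] at hi ⊢
  exact fun j hj => hi j (h hj)

lemma eq_of_le_of_Mx_eq {s t : Setoid (Fin n)} (h : s ≤ t) (hM : Mx t = Mx s) : s = t := by
  ext a b
  constructor
  · exact fun hab => h hab
  · intro hab
    rw [rel_iff_rep_eq]
    have hu : t.r (rep s a) (rep s b) :=
      t.trans' (t.symm' (h (rep_rel s a))) (t.trans' hab (h (rep_rel s b)))
    exact Mx_unique (hM ▸ rep_mem_Mx s a) (hM ▸ rep_mem_Mx s b) hu

lemma blocks_lt_blocks_of_lt {s t : Setoid (Fin n)} (h : s < t) : blocks t < blocks s := by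
  rw [blocks_eq_card_Mx, blocks_eq_card_Mx]
  refine Finset.card_lt_card ?_
  refine Finset.ssubset_iff_subset_ne.2 ⟨Mx_antitone h.le, fun hM => h.ne ?_⟩
  exact eq_of_le_of_Mx_eq h.le hM

lemma blocks_le_blocks_of_le {s t : Setoid (Fin n)} (h : s ≤ t) : blocks t ≤ blocks s := by
  rw [blocks_eq_card_Mx, blocks_eq_card_Mx]
  exact Finset.card_le_card (Mx_antitone h)


lemma blockPerm_rel {s : Setoid (Fin n)} {p : Equiv.Perm (Fin n)}
    (hp : IsBlockPerm s p) (i : Fin n) : s.r i (p i) := by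
  rcases hp i with h | h
  · exact h.1.1
  · exact h.2.1

lemma mem_mx_iff_not_lt {s : Setoid (Fin n)} {p : Equiv.Perm (Fin n)}
    (hp : IsBlockPerm s p) (i : Fin n) :
    (∀ j, s.r i j → j ≤ i) ↔ ¬ i < p i := by
  constructor
  · intro h hlt
    exact absurd (h _ (blockPerm_rel hp i)) (not_le.2 hlt)
  · intro h j hj
    by_contra hji
    rcases hp i with hc | hc
    · exact h hc.1.2
    · exact hc.1 ⟨j, hj, not_le.1 hji⟩

lemma card_exc (p : Equiv.Perm (Fin n)) :
    (Finset.univ.filter fun i => i < p i).card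
      = (Finset.univ.filter fun j => p⁻¹ j < j).card := by
  refine Finset.card_bij' (fun i _ => p i) (fun j _ => p⁻¹ j) ?_ ?_ ?_ ?_
  · intro a ha
    simp only [Finset.mem_filter, Finset.mem_univ, true_and] at ha ⊢
    simpa using ha
  · intro a ha
    simp only [Finset.mem_filter, Finset.mem_univ, true_and] at ha ⊢
    simpa using ha
  · intro a _; simp
  · intro a _; simp

lemma card_exc_q {m : ℕ} (p : Equiv.Perm (Fin (m+1))) :
    (Finset.univ.filter fun i => i < (p⁻¹ * finRotate (m+1)) i).card
      = (Finset.univ.filter fun j => j ≠ 0 ∧ j ≤ p⁻¹ j).card := by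
  refine Finset.card_bij' (fun i _ => i + 1) (fun j _ => j - 1) ?_ ?_ ?_ ?_
  · intro i hi
    simp only [Finset.mem_filter, Finset.mem_univ, true_and,
      Equiv.Perm.mul_apply, finRotate_succ_apply] at hi
    have hlast : (i : ℕ) + 1 < m + 1 := by
      by_contra hcon
      have hi' : (i : ℕ) = m := by omega
      have h0 : i + 1 = 0 := by
        apply Fin.ext
        simp [Fin.add_def, hi']
      rw [h0] at hi
      have := (p⁻¹ (0 : Fin (m+1))).isLt
      have := hi
      have hv : (i : ℕ) < (p⁻¹ (0 : Fin (m+1)) : ℕ) := hi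
      omega
    have hval : ((i + 1 : Fin (m+1)) : ℕ) = (i : ℕ) + 1 := by
      simp [Fin.add_def, Nat.mod_eq_of_lt hlast]
    simp only [Finset.mem_filter, Finset.mem_univ, true_and]
    constructor
    · intro h0
      rw [Fin.ext_iff] at h0
      simp [hval] at h0
    · have : (i : ℕ) < ((p⁻¹ (i + 1)) : ℕ) := hi
      rw [Fin.le_def, hval]
      omega
  · intro j hj
    simp only [Finset.mem_filter, Finset.mem_univ, true_and] at hj
    obtain ⟨hj0, hjle⟩ := hj
    have hval : ((j - 1 : Fin (m+1)) : ℕ) = (j : ℕ) - 1 := by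
      rw [Fin.coe_sub_one, if_neg hj0]
    simp only [Finset.mem_filter, Finset.mem_univ, true_and,
      Equiv.Perm.mul_apply, finRotate_succ_apply, sub_add_cancel]
    rw [Fin.lt_def, hval]
    have hj0' : (j : ℕ) ≠ 0 := fun h => hj0 (Fin.ext (by simp [h]))
    have := Fin.le_def.1 hjle
    omega
  · intro a _; exact add_sub_cancel_right a 1
  · intro a _; exact sub_add_cancel a 1

lemma card_split {m : ℕ} (p : Equiv.Perm (Fin (m+1))) :
    (Finset.univ.filter fun j => p⁻¹ j < j).card
      + (Finset.univ.filter fun j => j ≠ 0 ∧ j ≤ p⁻¹ j).card = m := by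
  rw [← Finset.card_union_of_disjoint]
  · have : ((Finset.univ.filter fun j => p⁻¹ j < j)
        ∪ (Finset.univ.filter fun j => j ≠ 0 ∧ j ≤ p⁻¹ j)) = Finset.univ.erase 0 := by
      ext j
      simp only [Finset.mem_union, Finset.mem_filter, Finset.mem_univ, true_and,
        Finset.mem_erase, and_true]
      constructor
      · rintro (h | h)
        · rintro rfl
          exact absurd h (by simp [Fin.lt_def])
        · exact h.1
      · intro hj
        rcases lt_or_ge (p⁻¹ j) j with h | h
        · exact Or.inl h
        · exact Or.inr ⟨hj, h⟩
    rw [this, Finset.card_erase_of_mem (Finset.mem_univ _)]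
    simp
  · rw [Finset.disjoint_filter]
    intro j _ hj
    simp only [not_and, not_le]
    exact fun _ => hj

lemma exc_sum {m : ℕ} (p : Equiv.Perm (Fin (m+1))) :
    (Finset.univ.filter fun i => i < p i).card
      + (Finset.univ.filter fun i => i < (p⁻¹ * finRotate (m+1)) i).card = m := by
  rw [card_exc, card_exc_q, card_split]

/-- merge the classes of `u` and `v` in `s` -/
def pm (s : Setoid (Fin n)) (u v : Fin n) : Setoid (Fin n) where
  r i j := s.r i j ∨ (s.r i u ∧ s.r v j) ∨ (s.r i v ∧ s.r u j)
  iseqv := by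
    constructor
    · intro i; exact Or.inl (s.refl' i)
    · rintro i j (h | ⟨h1, h2⟩ | ⟨h1, h2⟩)
      · exact Or.inl (s.symm' h)
      · exact Or.inr (Or.inr ⟨s.symm' h2, s.symm' h1⟩)
      · exact Or.inr (Or.inl ⟨s.symm' h2, s.symm' h1⟩)
    · rintro i j k (h | ⟨h1, h2⟩ | ⟨h1, h2⟩) (g | ⟨g1, g2⟩ | ⟨g1, g2⟩)
      · exact Or.inl (s.trans' h g)
      · exact Or.inr (Or.inl ⟨s.trans' h g1, g2⟩)
      · exact Or.inr (Or.inr ⟨s.trans' h g1, g2⟩)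
      · exact Or.inr (Or.inl ⟨h1, s.trans' h2 g⟩)
      · exact Or.inl (s.trans' (s.trans' h1 (s.trans' (s.symm' g1) (s.symm' h2))) g2)
      · exact Or.inl (s.trans' h1 g2)
      · exact Or.inr (Or.inr ⟨h1, s.trans' h2 g⟩)
      · exact Or.inl (s.trans' h1 g2)
      · exact Or.inl (s.trans' (s.trans' h1 (s.trans' (s.symm' g1) (s.symm' h2))) g2)

lemma pm_r {s : Setoid (Fin n)} {u v i j : Fin n} :
    (pm s u v).r i j ↔ s.r i j ∨ (s.r i u ∧ s.r v j) ∨ (s.r i v ∧ s.r u j) := Iff.rfl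

lemma le_pm (s : Setoid (Fin n)) (u v : Fin n) : s ≤ pm s u v := fun _ _ h => Or.inl h

lemma pm_rel_uv (s : Setoid (Fin n)) (u v : Fin n) : (pm s u v).r u v :=
  Or.inr (Or.inl ⟨s.refl' u, s.refl' v⟩)

lemma pm_le {s t : Setoid (Fin n)} {u v : Fin n} (hst : s ≤ t) (huv : t.r u v) :
    pm s u v ≤ t := by
  rintro i j (h | ⟨h1, h2⟩ | ⟨h1, h2⟩)
  · exact hst h
  · exact t.trans' (hst h1) (t.trans' huv (hst h2))
  · exact t.trans' (hst h1) (t.trans' (t.symm' huv) (hst h2))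

lemma pm_comm (s : Setoid (Fin n)) (u v : Fin n) : pm s u v = pm s v u := by
  ext i j
  rw [pm_r, pm_r]
  tauto

lemma pm_eq_self {s : Setoid (Fin n)} {u v : Fin n} (h : s.r u v) : pm s u v = s :=
  le_antisymm (pm_le le_rfl h) (le_pm s u v)

lemma pm_mono {s t : Setoid (Fin n)} (h : s ≤ t) (u v : Fin n) : pm s u v ≤ pm t u v := by
  rintro i j (hh | ⟨h1, h2⟩ | ⟨h1, h2⟩)
  · exact Or.inl (h hh)
  · exact Or.inr (Or.inl ⟨h h1, h h2⟩)
  · exact Or.inr (Or.inr ⟨h h1, h h2⟩)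

lemma pm_sup (s t : Setoid (Fin n)) (u v : Fin n) :
    pm s u v ⊔ t = pm (s ⊔ t) u v := by
  apply le_antisymm
  · apply sup_le
    · exact pm_mono le_sup_left u v
    · exact le_trans le_sup_right (le_pm _ u v)
  · apply pm_le (sup_le (le_trans (le_pm s u v) le_sup_left) le_sup_right)
    exact Setoid.le_def.1 le_sup_left (pm_rel_uv s u v)


lemma le_rep_of_rel {s : Setoid (Fin n)} {a b : Fin n} (h : s.r a b) : b ≤ rep s a := by
  have : s.r (rep s a) b := s.trans' (s.symm' (rep_rel s a)) h
  exact mem_Mx.1 (rep_mem_Mx s a) b this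

lemma Mx_pm_eq {s : Setoid (Fin n)} {u v : Fin n} (h : ¬ s.r u v)
    (hab : rep s u < rep s v) : Mx (pm s u v) = (Mx s).erase (rep s u) := by
  ext i
  simp only [Finset.mem_erase]
  constructor
  · intro hi
    refine ⟨?_, Mx_antitone (le_pm s u v) hi⟩
    rintro rfl
    have hrel : (pm s u v).r (rep s u) (rep s v) :=
      Or.inr (Or.inl ⟨s.symm' (rep_rel s u), rep_rel s v⟩)
    exact absurd (mem_Mx.1 hi _ hrel) (not_le.2 hab)
  · rintro ⟨hne, hi⟩
    rw [mem_Mx]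
    rintro j (hj | ⟨h1, h2⟩ | ⟨h1, h2⟩)
    · exact mem_Mx.1 hi j hj
    · exact absurd ((rep_eq_of_mem_Mx hi) ▸ rep_eq_rep_of_rel h1) hne
    · have hiv : i = rep s v := by
        rw [← rep_eq_of_mem_Mx hi]; exact rep_eq_rep_of_rel h1
      have hju : j ≤ rep s u := by
        have : s.r u j := h2
        calc j ≤ rep s j := le_rep_of_rel (s.refl' j)
        _ = rep s u := (rep_eq_rep_of_rel (s.symm' this)).symm ▸ rfl
      exact hju.trans (le_of_lt (hiv ▸ hab))

lemma rep_mem {s : Setoid (Fin n)} {u : Fin n} : rep s u ∈ Mx s := rep_mem_Mx s u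

lemma blocks_pm_add_one {s : Setoid (Fin n)} {u v : Fin n} (h : ¬ s.r u v) :
    blocks (pm s u v) + 1 = blocks s := by
  have hne : rep s u ≠ rep s v := fun hh => h (rel_iff_rep_eq.2 hh)
  rcases hne.lt_or_gt with hlt | hlt
  · rw [blocks_eq_card_Mx, blocks_eq_card_Mx, Mx_pm_eq h hlt,
      Finset.card_erase_of_mem (rep_mem_Mx s u)]
    have : 1 ≤ (Mx s).card := Finset.card_pos.2 ⟨rep s u, rep_mem_Mx s u⟩
    omega
  · rw [pm_comm, blocks_eq_card_Mx, blocks_eq_card_Mx,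
      Mx_pm_eq (fun hh => h (s.symm' hh)) hlt,
      Finset.card_erase_of_mem (rep_mem_Mx s v)]
    have : 1 ≤ (Mx s).card := Finset.card_pos.2 ⟨rep s v, rep_mem_Mx s v⟩
    omega

lemma blocks_le_blocks_pm_add_one (s : Setoid (Fin n)) (u v : Fin n) :
    blocks s ≤ blocks (pm s u v) + 1 := by
  by_cases h : s.r u v
  · rw [pm_eq_self h]; omega
  · rw [blocks_pm_add_one h]

/-- split the element `m` off from its class -/
def splitS (s : Setoid (Fin n)) (m : Fin n) : Setoid (Fin n) where
  r i j := s.r i j ∧ (i = j ∨ (i ≠ m ∧ j ≠ m))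
  iseqv := by
    constructor
    · exact fun i => ⟨s.refl' i, Or.inl rfl⟩
    · rintro i j ⟨h, rfl | ⟨h1, h2⟩⟩
      · exact ⟨s.symm' h, Or.inl rfl⟩
      · exact ⟨s.symm' h, Or.inr ⟨h2, h1⟩⟩
    · rintro i j k ⟨h, hij⟩ ⟨g, hjk⟩
      refine ⟨s.trans' h g, ?_⟩
      rcases hij with rfl | ⟨h1, h2⟩
      · exact hjk
      · rcases hjk with rfl | ⟨g1, g2⟩
        · exact Or.inr ⟨h1, h2⟩
        · exact Or.inr ⟨h1, g2⟩

lemma splitS_le (s : Setoid (Fin n)) (m : Fin n) : splitS s m ≤ s := fun _ _ h => h.1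

lemma Mx_splitS {s : Setoid (Fin n)} {m i0 : Fin n} (hm : m ∈ Mx s)
    (h0 : s.r i0 m) (hne : i0 ≠ m) :
    ∃ m', m' ∉ Mx s ∧ Mx (splitS s m) = insert m' (Mx s) := by
  have hnonempty : (Finset.univ.filter fun j => s.r m j ∧ j ≠ m).Nonempty :=
    ⟨i0, by simp [s.symm' h0, hne]⟩
  set m' := (Finset.univ.filter fun j => s.r m j ∧ j ≠ m).max' hnonempty with hm'def
  have hm'mem := (Finset.univ.filter fun j => s.r m j ∧ j ≠ m).max'_mem hnonempty
  rw [Finset.mem_filter] at hm'mem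
  obtain ⟨-, hm'rel, hm'ne⟩ := hm'mem
  have hle : ∀ j, s.r m j → j ≠ m → j ≤ m' := by
    intro j hj hjne
    exact Finset.le_max' _ j (by simp [hj, hjne])
  have hm'notMx : m' ∉ Mx s := by
    intro hmem
    exact hm'ne (Mx_unique hmem hm (s.symm' hm'rel))
  refine ⟨m', hm'notMx, ?_⟩
  ext i
  simp only [Finset.mem_insert]
  constructor
  · intro hi
    by_cases hrel : s.r i m
    · by_cases him : i = m
      · exact Or.inr (him ▸ hm)
      · left
        refine le_antisymm (hle i (s.symm' hrel) him) ?_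
        have : (splitS s m).r i m' := ⟨s.trans' hrel hm'rel, Or.inr ⟨him, hm'ne⟩⟩
        exact mem_Mx.1 hi m' this
    · right
      rw [mem_Mx]
      intro j hj
      have hjne : j ≠ m := fun hh => hrel (hh ▸ hj)
      have hine : i ≠ m := fun hh => hrel (hh ▸ s.refl' i)
      exact mem_Mx.1 hi j ⟨hj, Or.inr ⟨hine, hjne⟩⟩
  · rintro (rfl | hi)
    · rw [mem_Mx]
      rintro j ⟨hj, rfl | ⟨h1, h2⟩⟩
      · exact le_rfl
      · exact hle j (s.trans' hm'rel hj) h2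
    · exact Mx_antitone (splitS_le s m) hi

lemma exists_rel_not_rel {x y : Setoid (Fin n)} (hlt : x < y) :
    ∃ a b, y.r a b ∧ ¬ x.r a b := by
  by_contra hcon
  push_neg at hcon
  exact hlt.ne (le_antisymm hlt.le (fun a b h => hcon a b h))

lemma merge_lemma {x y : Setoid (Fin n)} (hx : IsNoncrossing x) (hy : IsNoncrossing y)
    (hlt : x < y) :
    ∃ u v : Fin n, ¬ x.r u v ∧ pm x u v ≤ y ∧ IsNoncrossing (pm x u v) := by
  obtain ⟨a0, b0, hyab, hxab⟩ := exists_rel_not_rel hlt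
  have hxy : x ≤ y := hlt.le
  set C : Finset (Fin n) := Finset.univ.filter fun j => y.r a0 j with hC
  have ha0C : a0 ∈ C := by simp [hC, y.refl' a0]
  have hCne : C.Nonempty := ⟨a0, ha0C⟩
  set u := C.min' hCne with hu
  have huC : y.r a0 u := by
    have := C.min'_mem hCne
    simp only [hC, Finset.mem_filter] at this
    exact this.2
  have hu_min : ∀ j, y.r a0 j → u ≤ j := fun j hj =>
    C.min'_le j (by simp [hC, hj])
  set D : Finset (Fin n) := C.filter (fun j => ¬ x.r u j) with hD
  have hDne : D.Nonempty := by
    by_cases hua0 : x.r u a0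
    · refine ⟨b0, ?_⟩
      simp only [hD, hC, Finset.mem_filter, Finset.mem_univ, true_and]
      exact ⟨hyab, fun hub0 => hxab (x.trans' (x.symm' hua0) hub0)⟩
    · refine ⟨a0, ?_⟩
      simp only [hD, hC, Finset.mem_filter, Finset.mem_univ, true_and]
      exact ⟨y.refl' a0, hua0⟩
  set m := D.min' hDne with hm
  have hmD := D.min'_mem hDne
  simp only [hD, hC, Finset.mem_filter, Finset.mem_univ, true_and] at hmD
  obtain ⟨hmC, hum⟩ := hmD
  have hm_min : ∀ j, y.r a0 j → ¬ x.r u j → m ≤ j := fun j h1 h2 =>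
    D.min'_le j (by simp [hD, hC, h1, h2])
  have hulm : u < m := by
    rcases lt_or_eq_of_le (hu_min m hmC) with h | h
    · exact h
    · exact absurd (show x.r u m by rw [← h]) hum
  set M := rep x m with hM
  have hmM : x.r m M := rep_rel x m
  have hleM : ∀ j, x.r m j → j ≤ M := fun j h => le_rep_of_rel h
  -- closure of C under x
  have hCcl : ∀ i j, y.r a0 i → x.r i j → y.r a0 j := fun i j h1 h2 =>
    y.trans' h1 (hxy h2)
  have hB1C : ∀ i, x.r u i → y.r a0 i := fun i h => hCcl u i huC h
  have hB2C : ∀ i, x.r m i → y.r a0 i := fun i h => hCcl m i hmC h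
  have hB2ge : ∀ i, x.r m i → m ≤ i := fun i h =>
    hm_min i (hB2C i h) (fun hui => hum (x.trans' hui (x.symm' h)))
  have F1 : ∀ j, y.r a0 j → j < m → x.r u j := by
    intro j h1 h2
    by_contra h3
    exact absurd (hm_min j h1 h3) (not_le.2 h2)
  have F2 : ∀ w, x.r u w → ¬ (m < w ∧ w < M) := by
    rintro w hw ⟨h1, h2⟩
    exact hum (hx u m w M hulm h1 h2 hw hmM)
  refine ⟨u, m, hum, pm_le hxy (y.trans' (y.symm' huC) hmC), ?_⟩
  -- noncrossing of the merge
  intro a b c d hab hbc hcd hac hbd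
  have hyac : ∀ (_ : y.r a0 a) (_ : y.r a0 c), y.r a c := fun h1 h2 =>
    y.trans' (y.symm' h1) h2
  rcases hac with hac1 | ⟨hau, hmc⟩ | ⟨ham, huc⟩
  · rcases hbd with hbd1 | ⟨hbu, hmd⟩ | ⟨hbm, hud⟩
    -- (1,1)
    · exact Or.inl (hx a b c d hab hbc hcd hac1 hbd1)
    -- (1,2') : b ∈ B1, d ∈ B2
    · have hyab' : y.r a b :=
        hy a b c d hab hbc hcd (hxy hac1)
          (y.trans' (y.symm' (hB1C b (x.symm' hbu))) (hB2C d hmd))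
      have haC : y.r a0 a := y.trans' (hB1C b (x.symm' hbu)) (y.symm' hyab')
      have hdM : d ≤ M := hleM d hmd
      have hbm' : b < m := by
        have hnb := F2 b (x.symm' hbu)
        have hbM : b < M := lt_of_lt_of_le (hbc.trans hcd) hdM
        have hbne : b ≠ m := fun h => hum (show x.r u m by rw [← h]; exact x.symm' hbu)
        rcases lt_trichotomy b m with h | h | h
        · exact h
        · exact absurd h hbne
        · exact absurd ⟨h, hbM⟩ hnb
      have hua : x.r u a := F1 a haC (hab.trans hbm')
      exact Or.inl (x.trans' (x.symm' hua) (x.symm' hbu))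
    -- (1,3') : b ∈ B2, d ∈ B1
    · have hyab' : y.r a b :=
        hy a b c d hab hbc hcd (hxy hac1)
          (y.trans' (y.symm' (hB2C b (x.symm' hbm))) (hB1C d hud))
      have haC : y.r a0 a := y.trans' (hB2C b (x.symm' hbm)) (y.symm' hyab')
      have hbM : b ≤ M := hleM b (x.symm' hbm)
      rcases lt_trichotomy c M with h | h | h
      · have hbMrel : x.r b M := x.trans' hbm hmM
        exact Or.inl (hx a b c M hab hbc h hac1 hbMrel)
      · have ham' : x.r a m := x.trans' hac1 (show x.r c m by rw [h]; exact x.symm' hmM)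
        exact Or.inl (x.trans' ham' (x.symm' hbm))
      · rcases lt_trichotomy a m with h2 | h2 | h2
        · have hua : x.r u a := F1 a haC h2
          exact Or.inr (Or.inl ⟨x.symm' hua, x.symm' hbm⟩)
        · exact Or.inl (show x.r a b by rw [h2]; exact x.symm' hbm)
        · have haM : a < M := lt_of_lt_of_le hab hbM
          have := hx m a M c h2 haM h hmM hac1
          exact Or.inl (x.trans' (x.symm' this) (x.symm' hbm))
  · rcases hbd with hbd1 | ⟨hbu, hmd⟩ | ⟨hbm, hud⟩
    -- (2,1') : a ∈ B1, c ∈ B2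
    · have hyab' : y.r a b :=
        hy a b c d hab hbc hcd (hyac (hB1C a (x.symm' hau)) (hB2C c hmc)) (hxy hbd1)
      have hbC : y.r a0 b := y.trans' (hB1C a (x.symm' hau)) hyab'
      rcases lt_trichotomy b m with h | h | h
      · have hub : x.r u b := F1 b hbC h
        exact Or.inl (x.trans' hau hub)
      · exact Or.inr (Or.inl ⟨hau, show x.r m b by rw [h]⟩)
      · have := hx m b c d h hbc hcd hmc hbd1
        exact Or.inr (Or.inl ⟨hau, this⟩)
    -- (2,2') : a,b ∈ B1
    · exact Or.inl (x.trans' hau (x.symm' hbu))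
    -- (2,3') : a ∈ B1, b ∈ B2
    · exact Or.inr (Or.inl ⟨hau, x.symm' hbm⟩)
  · rcases hbd with hbd1 | ⟨hbu, hmd⟩ | ⟨hbm, hud⟩
    -- (3,1') : a ∈ B2, c ∈ B1
    · have hma : m ≤ a := hB2ge a (x.symm' ham)
      have hMc : M < c := by
        have hnc := F2 c huc
        have hmc' : m < c := lt_of_le_of_lt hma (hab.trans hbc)
        have hcne : c ≠ M := by
          rintro rfl
          exact hum (x.trans' huc (x.symm' hmM))
        rcases lt_trichotomy c M with h | h | h
        · exact absurd ⟨hmc', h⟩ hnc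
        · exact absurd h hcne
        · exact h
      rcases lt_trichotomy b M with h | h | h
      · have haM : x.r a M := x.trans' ham hmM
        have hMd : M < d := hMc.trans hcd
        exact Or.inl (hx a b M d hab h hMd haM hbd1)
      · exact Or.inl (x.trans' ham (x.trans' hmM (show x.r M b by rw [h])))
      · have hub : u < b := hulm.trans (lt_of_le_of_lt hma hab)
        have := hx u b c d hub hbc hcd huc hbd1
        exact Or.inr (Or.inr ⟨ham, this⟩)
    -- (3,2') : a ∈ B2, b ∈ B1
    · exact Or.inr (Or.inr ⟨ham, x.symm' hbu⟩)
    -- (3,3') : a,b ∈ B2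
    · exact Or.inl (x.trans' ham (x.symm' hbm))

lemma nc_lt_iff {x y : NC n} : x < y ↔ x.1 < y.1 := Subtype.coe_lt_coe.symm

lemma nc_covby_of_blocks {x y : NC n} (h : x.1 < y.1)
    (hb : blocks x.1 = blocks y.1 + 1) : x ⋖ y := by
  refine ⟨nc_lt_iff.2 h, ?_⟩
  intro z h1 h2
  have b1 := blocks_lt_blocks_of_lt (nc_lt_iff.1 h1)
  have b2 := blocks_lt_blocks_of_lt (nc_lt_iff.1 h2)
  omega

lemma nc_covby_spec {x y : NC n} (h : x ⋖ y) :
    ∃ u v, ¬ x.1.r u v ∧ y.1 = pm x.1 u v ∧ blocks y.1 + 1 = blocks x.1 := by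
  obtain ⟨u, v, huv, hle, hncr⟩ := merge_lemma x.2 y.2 (nc_lt_iff.1 h.lt)
  have hxz : x < (⟨pm x.1 u v, hncr⟩ : NC n) := by
    rw [nc_lt_iff]
    exact lt_of_le_of_ne (le_pm x.1 u v)
      (fun hh => huv (hh ▸ pm_rel_uv x.1 u v))
  have hzy : (⟨pm x.1 u v, hncr⟩ : NC n) ≤ y := Subtype.coe_le_coe.1 hle
  have hzey : (⟨pm x.1 u v, hncr⟩ : NC n) = y := by
    by_contra hne
    exact h.2 hxz (lt_of_le_of_ne hzy hne)
  have hy1 : y.1 = pm x.1 u v := by rw [← hzey]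
  exact ⟨u, v, huv, hy1, by rw [hy1]; exact blocks_pm_add_one huv⟩

lemma H_cov_bound (t : Setoid (Fin n)) {x y : NC n} (h : x ⋖ y) :
    |((blocks x.1 : ℤ) - 2 * (blocks (x.1 ⊔ t) : ℤ))
      - ((blocks y.1 : ℤ) - 2 * (blocks (y.1 ⊔ t) : ℤ))| ≤ 1 := by
  obtain ⟨u, v, huv, hy1, hb⟩ := nc_covby_spec h
  have hsup : y.1 ⊔ t = pm (x.1 ⊔ t) u v := by rw [hy1, pm_sup]
  have h1 : blocks (x.1 ⊔ t) ≤ blocks (y.1 ⊔ t) + 1 := by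
    rw [hsup]; exact blocks_le_blocks_pm_add_one _ u v
  have h2 : blocks (y.1 ⊔ t) ≤ blocks (x.1 ⊔ t) := by
    rw [hsup]; exact blocks_le_blocks_of_le (le_pm _ u v)
  rw [abs_le]
  constructor <;> [skip; skip] <;> push_cast <;> omega

lemma H_adj_bound (t : Setoid (Fin n)) {x y : NC n} (h : (hasse n).Adj x y) :
    |((blocks x.1 : ℤ) - 2 * (blocks (x.1 ⊔ t) : ℤ))
      - ((blocks y.1 : ℤ) - 2 * (blocks (y.1 ⊔ t) : ℤ))| ≤ 1 := by
  rcases (show x ⋖ y ∨ y ⋖ x from h) with h | h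
  · exact H_cov_bound t h
  · rw [abs_sub_comm]
    exact H_cov_bound t h

lemma H_walk_bound (t : Setoid (Fin n)) {x y : NC n} (w : (hasse n).Walk x y) :
    |((blocks x.1 : ℤ) - 2 * (blocks (x.1 ⊔ t) : ℤ))
      - ((blocks y.1 : ℤ) - 2 * (blocks (y.1 ⊔ t) : ℤ))| ≤ (w.length : ℤ) := by
  induction w with
  | nil => simp
  | cons hadj w ih =>
    rename_i a b c
    calc _ ≤ |((blocks a.1 : ℤ) - 2 * (blocks (a.1 ⊔ t) : ℤ))
          - ((blocks b.1 : ℤ) - 2 * (blocks (b.1 ⊔ t) : ℤ))|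
          + |((blocks b.1 : ℤ) - 2 * (blocks (b.1 ⊔ t) : ℤ))
          - ((blocks c.1 : ℤ) - 2 * (blocks (c.1 ⊔ t) : ℤ))| := abs_sub_le _ _ _
    _ ≤ 1 + (SimpleGraph.Walk.length w : ℤ) := add_le_add (H_adj_bound t hadj) ih
    _ = _ := by push_cast [SimpleGraph.Walk.length_cons]; ring

lemma splitS_noncrossing {s : Setoid (Fin n)} (hs : IsNoncrossing s) (m : Fin n) :
    IsNoncrossing (splitS s m) := by
  intro a b c d hab hbc hcd hac hbd
  obtain ⟨hac1, hac2⟩ := hac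
  obtain ⟨hbd1, hbd2⟩ := hbd
  have hacne : a ≠ c := hab.trans hbc |>.ne
  have hbdne : b ≠ d := hbc.trans hcd |>.ne
  rcases hac2 with h | ⟨ham, hcm⟩
  · exact absurd h hacne
  rcases hbd2 with h | ⟨hbm, hdm⟩
  · exact absurd h hbdne
  exact ⟨hs a b c d hab hbc hcd hac1 hbd1, Or.inr ⟨ham, hbm⟩⟩

lemma eq_bot_of_blocks_eq {s : Setoid (Fin n)} (h : blocks s = n) : s = ⊥ := by
  have hMx : Mx s = Finset.univ := by
    apply Finset.eq_univ_of_card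
    rw [← blocks_eq_card_Mx, h]
    simp
  ext a b
  simp only [Setoid.bot_def]
  constructor
  · intro hab
    have ha : a ∈ Mx s := hMx ▸ Finset.mem_univ a
    have hb : b ∈ Mx s := hMx ▸ Finset.mem_univ b
    exact Mx_unique ha hb hab
  · rintro rfl
    exact s.refl' a

lemma bot_noncrossing : IsNoncrossing (⊥ : Setoid (Fin n)) := by
  intro a b c d hab hbc hcd hac _
  have : a = c := by simpa [Setoid.bot_def] using hac
  exact absurd this (hab.trans hbc).ne

lemma walk_to_bot (x : NC n) :
    ∃ w : (hasse n).Walk x ⟨⊥, bot_noncrossing⟩, blocks x.1 + w.length = n := by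
  have hble : ∀ y : NC n, blocks y.1 ≤ n := by
    intro y
    rw [blocks_eq_card_Mx]
    simpa using Finset.card_le_card (Finset.subset_univ (Mx y.1))
  obtain ⟨k, hk⟩ : ∃ k, n = blocks x.1 + k := ⟨n - blocks x.1, by have := hble x; omega⟩

  induction k generalizing x with
  | zero =>
    have hx : x = ⟨⊥, bot_noncrossing⟩ := Subtype.ext (eq_bot_of_blocks_eq (by omega))
    subst hx
    exact ⟨SimpleGraph.Walk.nil, by rw [SimpleGraph.Walk.length_nil]; omega⟩
  | succ k ih =>
    have hlt : blocks x.1 < n := by omega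
    obtain ⟨i0, hi0⟩ : ∃ i0, i0 ∉ Mx x.1 := by
      by_contra hcon
      push_neg at hcon
      have : Mx x.1 = Finset.univ := Finset.eq_univ_iff_forall.2 hcon
      rw [blocks_eq_card_Mx, this] at hlt
      simp at hlt
    set m := rep x.1 i0 with hmdef
    have hi0m : x.1.r i0 m := rep_rel x.1 i0
    have hi0ne : i0 ≠ m := fun h => hi0 (h ▸ rep_mem_Mx x.1 i0)
    have hmMx : m ∈ Mx x.1 := rep_mem_Mx x.1 i0
    obtain ⟨m', hm'notMx, hMxeq⟩ := Mx_splitS hmMx hi0m hi0ne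
    have hne : splitS x.1 m ≠ x.1 := by
      intro hh
      have h2 : (splitS x.1 m).r i0 m := by rw [hh]; exact hi0m
      rcases h2.2 with h | ⟨_, h⟩
      · exact hi0ne h
      · exact h rfl
    have hblocks' : blocks (splitS x.1 m) = blocks x.1 + 1 := by
      rw [blocks_eq_card_Mx, blocks_eq_card_Mx, hMxeq,
        Finset.card_insert_of_notMem hm'notMx]
    have hlt' : splitS x.1 m < x.1 := lt_of_le_of_ne (splitS_le x.1 m) hne
    set x' : NC n := ⟨splitS x.1 m, splitS_noncrossing x.2 m⟩ with hx'def
    have hbx' : blocks x'.1 = blocks x.1 + 1 := hblocks'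
    have hcov : x' ⋖ x := nc_covby_of_blocks hlt' (by omega)
    obtain ⟨w', hw'⟩ := ih x' (by omega)
    exact ⟨SimpleGraph.Walk.cons (show (hasse n).Adj x x' from Or.inr hcov) w', by
      rw [SimpleGraph.Walk.length_cons]; omega⟩

lemma blocks_of_blockPerm {s : Setoid (Fin n)} {p : Equiv.Perm (Fin n)}
    (hp : IsBlockPerm s p) :
    blocks s + (Finset.univ.filter fun i => i < p i).card = n := by
  have hMx : Mx s = Finset.univ.filter fun i => ¬ i < p i := by
    ext i
    simp only [mem_Mx, Finset.mem_filter, Finset.mem_univ, true_and]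
    exact mem_mx_iff_not_lt hp i
  rw [blocks_eq_card_Mx, hMx, add_comm,
    Finset.card_filter_add_card_filter_not]
  simp

lemma blocks_top {m : ℕ} : blocks (⊤ : Setoid (Fin (m+1))) = 1 := by
  have htop : ∀ i j : Fin (m+1), (⊤ : Setoid (Fin (m+1))).r i j := by
    intro i j
    show (⊤ : Setoid (Fin (m+1))) i j
    rw [Setoid.top_def]
    trivial
  have hMx : Mx (⊤ : Setoid (Fin (m+1))) = {Fin.last m} := by
    ext i
    simp only [mem_Mx, Finset.mem_singleton]
    constructor
    · intro h
      exact le_antisymm (Fin.le_last i) (h (Fin.last m) (htop _ _))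
    · rintro rfl j _
      exact Fin.le_last j
  rw [blocks_eq_card_Mx, hMx, Finset.card_singleton]

lemma sup_eq_top {m : ℕ} (π κ : NC (m+1)) (p : Equiv.Perm (Fin (m+1)))
    (hp : IsBlockPerm π.1 p) (hq : IsBlockPerm κ.1 (p⁻¹ * finRotate (m+1))) :
    π.1 ⊔ κ.1 = (⊤ : Setoid (Fin (m+1))) := by
  set t := π.1 ⊔ κ.1 with ht
  have key : ∀ i, t.r i (finRotate (m+1) i) := by
    intro i
    have h1 : κ.1.r i ((p⁻¹ * finRotate (m+1)) i) := blockPerm_rel hq i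
    have h2 : π.1.r ((p⁻¹ * finRotate (m+1)) i) (p ((p⁻¹ * finRotate (m+1)) i)) :=
      blockPerm_rel hp _
    have h3 : p ((p⁻¹ * finRotate (m+1)) i) = finRotate (m+1) i := by
      simp [Equiv.Perm.mul_apply]
    rw [h3] at h2
    exact t.trans' (Setoid.le_def.1 le_sup_right h1) (Setoid.le_def.1 le_sup_left h2)
  have chain : ∀ v (hv : v < m + 1), t.r 0 ⟨v, hv⟩ := by
    intro v
    induction v with
    | zero => intro hv; exact t.refl' 0
    | succ v ih =>
      intro hv
      have h1 := ih (by omega)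
      have h2 := key ⟨v, by omega⟩
      have h3 : finRotate (m+1) ⟨v, by omega⟩ = ⟨v + 1, hv⟩ := by
        rw [finRotate_succ_apply]
        apply Fin.ext
        simp [Fin.add_def]
        omega
      rw [h3] at h2
      exact t.trans' h1 h2
  apply le_antisymm le_top
  intro a b _
  have ha : t.r 0 a := chain a.1 a.2
  have hb : t.r 0 b := chain b.1 b.2
  exact t.trans' (t.symm' ha) hb


end KrewerasAux

open KrewerasAux in
/-- The Hasse-diagram distance between `π` and its Kreweras complement `κ`
(defined by `P_κ = P_π⁻¹ · (1 2 ... n)`) equals `n - 1`. -/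
theorem dist_kreweras (n : ℕ) (hn : 1 ≤ n) (π κ : NC n)
    (p q : Equiv.Perm (Fin n)) (hp : IsBlockPerm π.1 p) (hq : IsBlockPerm κ.1 q)
    (hkr : q = p⁻¹ * finRotate n) :
    (hasse n).dist π κ = n - 1 := by
  subst hkr
  obtain ⟨m, rfl⟩ : ∃ m, n = m + 1 := ⟨n - 1, by omega⟩
  have hbp := blocks_of_blockPerm hp
  have hbq := blocks_of_blockPerm hq
  have hexc := exc_sum p
  have hsum : blocks π.1 + blocks κ.1 = m + 2 := by omega
  obtain ⟨wπ, hwπ⟩ := walk_to_bot π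
  obtain ⟨wκ, hwκ⟩ := walk_to_bot κ
  have hW : ∃ W : (hasse (m+1)).Walk π κ, W.length = m := by
    refine ⟨wπ.append wκ.reverse, ?_⟩
    rw [SimpleGraph.Walk.length_append, SimpleGraph.Walk.length_reverse]
    omega
  obtain ⟨W, hWlen⟩ := hW
  have hub : (hasse (m+1)).dist π κ ≤ m := le_trans (SimpleGraph.dist_le W) (le_of_eq hWlen)
  have hreach : (hasse (m+1)).Reachable π κ := ⟨W⟩
  obtain ⟨w, hw⟩ := hreach.exists_walk_length_eq_dist
  have hlow := H_walk_bound κ.1 w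
  rw [hw] at hlow
  have htop : π.1 ⊔ κ.1 = (⊤ : Setoid (Fin (m+1))) := sup_eq_top π κ p hp hq
  have hidem : κ.1 ⊔ κ.1 = κ.1 := by
    exact le_antisymm (sup_le le_rfl le_rfl) le_sup_left
  rw [htop, hidem, blocks_top] at hlow
  have hX : ((blocks π.1 : ℤ) - 2 * ((1 : ℕ) : ℤ))
      - ((blocks κ.1 : ℤ) - 2 * (blocks κ.1 : ℤ)) = (m : ℤ) := by
    push_cast
    omega
  rw [hX] at hlow
  have hml : (m : ℤ) ≤ ((hasse (m+1)).dist π κ : ℤ) :=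
    le_trans (le_abs_self _) hlow
  have : m ≤ (hasse (m+1)).dist π κ := by exact_mod_cast hml
  omega
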